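/- If (π, π̃) is an α-coupled policy pair and ε = max_s |E_{a∼π̃(·|s)}[A_π(s,a)]|, then |η(π̃) − L_π(π̃)| ≤ 2εγα / ((1−γ)(1−γ(1−α))). -/

import Mathlib

open Finset

/-- State distribution at time `t` when executing policy `π`, starting from `ρ₀`. -/
noncomputable def stateDist {S A : Type} [Fintype S] [Fintype A]
    (P : S → A → S → ℝ) (π : S → A → ℝ) (ρ₀ : S → ℝ) : ℕ → S → ℝ
  | 0 => ρ₀
  | (t+1) => fun s' => ∑ s, ∑ a, stateDist P π ρ₀ t s * π s a * P s a s'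

/-- Unnormalized discounted state visitation frequency. -/
noncomputable def visit {S A : Type} [Fintype S] [Fintype A]
    (P : S → A → S → ℝ) (π : S → A → ℝ) (ρ₀ : S → ℝ) (γ : ℝ) (s : S) : ℝ :=
  ∑' t : ℕ, γ ^ t * stateDist P π ρ₀ t s

section Mu
open scoped Classical

variable {S A : Type} [Fintype S] [Fintype A]

noncomputable def cKer (P : S → A → S → ℝ) (π πt : S → A → ℝ) (c : S → A → A → ℝ)
    (s st s' st' : S) : ℝ :=
  if s = st then
    ∑ a, ∑ b, c s a b * (if a = b then (if s' = st' then P s a s' else 0)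
      else P s a s' * P s b st')
  else (∑ a, π s a * P s a s') * (∑ b, πt st b * P st b st')

lemma cKer_nonneg (P : S → A → S → ℝ) (π πt : S → A → ℝ) (c : S → A → A → ℝ)
    (hP : ∀ s a s', 0 ≤ P s a s') (hπ : ∀ s a, 0 ≤ π s a) (hπt : ∀ s a, 0 ≤ πt s a)
    (hc : ∀ s a b, 0 ≤ c s a b) (s st s' st' : S) :
    0 ≤ cKer P π πt c s st s' st' := by
  unfold cKer
  split
  · refine Finset.sum_nonneg fun a _ => Finset.sum_nonneg fun b _ => ?_
    refine mul_nonneg (hc s a b) ?_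
    split
    · split <;> simp [hP]
    · exact mul_nonneg (hP _ _ _) (hP _ _ _)
  · exact mul_nonneg (Finset.sum_nonneg fun a _ => mul_nonneg (hπ _ _) (hP _ _ _))
      (Finset.sum_nonneg fun b _ => mul_nonneg (hπt _ _) (hP _ _ _))

lemma cKer_fst (P : S → A → S → ℝ) (π πt : S → A → ℝ) (c : S → A → A → ℝ)
    (hPsum : ∀ s a, ∑ s', P s a s' = 1)
    (hπtsum : ∀ s, ∑ a, πt s a = 1)
    (hc1 : ∀ s a, ∑ b, c s a b = π s a) (s st s' : S) :
    ∑ st', cKer P π πt c s st s' st' = ∑ a, π s a * P s a s' := by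
  unfold cKer
  split
  · rw [Finset.sum_comm]
    have : ∀ a, ∑ st', ∑ b, c s a b * (if a = b then (if s' = st' then P s a s' else 0)
        else P s a s' * P s b st') = π s a * P s a s' := by
      intro a
      rw [Finset.sum_comm]
      have hb : ∀ b, ∑ st', c s a b * (if a = b then (if s' = st' then P s a s' else 0)
          else P s a s' * P s b st') = c s a b * P s a s' := by
        intro b
        by_cases hab : a = b
        · subst hab
          simp only [if_pos rfl, ← Finset.mul_sum, if_true,
            Finset.sum_ite_eq, Finset.mem_univ]
        · simp only [if_neg hab, ← Finset.mul_sum]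
          rw [hPsum, mul_one]
      simp only [hb, ← Finset.sum_mul, hc1]
    simp only [this]
  · rw [← Finset.mul_sum]
    rw [Finset.sum_comm]
    have : ∀ b, ∑ st', πt st b * P st b st' = πt st b := by
      intro b; rw [← Finset.mul_sum, hPsum, mul_one]
    simp only [this, hπtsum, mul_one]

lemma cKer_snd (P : S → A → S → ℝ) (π πt : S → A → ℝ) (c : S → A → A → ℝ)
    (hPsum : ∀ s a, ∑ s', P s a s' = 1)
    (hπsum : ∀ s, ∑ a, π s a = 1)
    (hc2 : ∀ s b, ∑ a, c s a b = πt s b) (s st st' : S) :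
    ∑ s', cKer P π πt c s st s' st' = ∑ b, πt st b * P st b st' := by
  unfold cKer
  split
  · next h =>
    subst h
    rw [Finset.sum_comm]
    have : ∀ a, ∑ s', ∑ b, c s a b * (if a = b then (if s' = st' then P s a s' else 0)
        else P s a s' * P s b st') = ∑ b, c s a b * P s b st' := by
      intro a
      rw [Finset.sum_comm]
      refine Finset.sum_congr rfl fun b _ => ?_
      by_cases hab : a = b
      · subst hab
        simp only [if_pos rfl, ← Finset.mul_sum, if_true,
          Finset.sum_ite_eq', Finset.mem_univ]
      · simp only [if_neg hab, ← mul_assoc, ← Finset.sum_mul]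
        rw [← Finset.mul_sum, hPsum, mul_one]
    simp only [this]
    rw [Finset.sum_comm]
    simp only [← Finset.sum_mul, hc2]
  · rw [← Finset.sum_mul]
    have : ∀ a, ∑ s', π s a * P s a s' = π s a := by
      intro a; rw [← Finset.mul_sum, hPsum, mul_one]
    rw [Finset.sum_comm]
    simp only [this, hπsum, one_mul]


noncomputable def mu (P : S → A → S → ℝ) (π πt : S → A → ℝ) (c : S → A → A → ℝ)
    (ρ₀ : S → ℝ) : ℕ → S → S → ℝ
  | 0 => fun s st => if s = st then ρ₀ s else 0
  | (t+1) => fun s' st' => ∑ s, ∑ st, mu P π πt c ρ₀ t s st * cKer P π πt c s st s' st'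

lemma mu_nonneg (P : S → A → S → ℝ) (π πt : S → A → ℝ) (c : S → A → A → ℝ) (ρ₀ : S → ℝ)
    (hP : ∀ s a s', 0 ≤ P s a s') (hπ : ∀ s a, 0 ≤ π s a) (hπt : ∀ s a, 0 ≤ πt s a)
    (hc : ∀ s a b, 0 ≤ c s a b) (hρ : ∀ s, 0 ≤ ρ₀ s) :
    ∀ t s st, 0 ≤ mu P π πt c ρ₀ t s st
  | 0, s, st => by unfold mu; split <;> simp [hρ]
  | (t+1), s', st' => by
    rw [mu]
    refine Finset.sum_nonneg fun s _ => Finset.sum_nonneg fun st _ => ?_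
    exact mul_nonneg (mu_nonneg P π πt c ρ₀ hP hπ hπt hc hρ t s st)
      (cKer_nonneg P π πt c hP hπ hπt hc s st s' st')

lemma stateDist_nonneg (P : S → A → S → ℝ) (π : S → A → ℝ) (ρ₀ : S → ℝ)
    (hP : ∀ s a s', 0 ≤ P s a s') (hρ : ∀ s, 0 ≤ ρ₀ s) (hπ : ∀ s a, 0 ≤ π s a) :
    ∀ t s, 0 ≤ stateDist P π ρ₀ t s
  | 0, s => hρ s
  | (t+1), s' => by
    rw [stateDist]
    refine Finset.sum_nonneg fun s _ => Finset.sum_nonneg fun a _ => ?_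
    exact mul_nonneg (mul_nonneg (stateDist_nonneg P π ρ₀ hP hρ hπ t s) (hπ s a)) (hP s a s')

lemma sum_comm3 {X Y Z M : Type} [Fintype X] [Fintype Y] [Fintype Z] [AddCommMonoid M]
    (f : X → Y → Z → M) :
    ∑ x, ∑ y, ∑ z, f x y z = ∑ z, ∑ x, ∑ y, f x y z := by
  have h : ∑ x, ∑ y, ∑ z, f x y z = ∑ x, ∑ z, ∑ y, f x y z :=
    Finset.sum_congr rfl fun x _ => Finset.sum_comm
  rw [h, Finset.sum_comm]

lemma stateDist_sum' (P : S → A → S → ℝ) (π : S → A → ℝ) (ρ₀ : S → ℝ)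
    (hPsum : ∀ s a, ∑ s', P s a s' = 1) (hρsum : ∑ s, ρ₀ s = 1)
    (hπsum : ∀ s, ∑ a, π s a = 1) :
    ∀ t, ∑ s, stateDist P π ρ₀ t s = 1
  | 0 => hρsum
  | (t+1) => by
    simp only [stateDist]
    rw [Finset.sum_comm]
    have h : ∀ s, ∑ s', ∑ a, stateDist P π ρ₀ t s * π s a * P s a s'
        = stateDist P π ρ₀ t s := by
      intro s
      rw [Finset.sum_comm]
      simp only [mul_assoc, ← Finset.mul_sum, ← Finset.sum_mul]
      simp [hPsum, hπsum]
    simp only [h]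
    exact stateDist_sum' P π ρ₀ hPsum hρsum hπsum t

lemma mu_fst (P : S → A → S → ℝ) (π πt : S → A → ℝ) (c : S → A → A → ℝ) (ρ₀ : S → ℝ)
    (hPsum : ∀ s a, ∑ s', P s a s' = 1)
    (hπtsum : ∀ s, ∑ a, πt s a = 1)
    (hc1 : ∀ s a, ∑ b, c s a b = π s a) :
    ∀ t s, ∑ st, mu P π πt c ρ₀ t s st = stateDist P π ρ₀ t s
  | 0, s => by
    simp only [mu, stateDist]
    rw [Finset.sum_ite_eq Finset.univ s (fun _ => ρ₀ s)]
    simp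
  | (t+1), s' => by
    simp only [mu, stateDist]
    rw [Finset.sum_comm]
    refine Finset.sum_congr rfl fun s _ => ?_
    rw [Finset.sum_comm]
    have h : ∀ st, ∑ st', mu P π πt c ρ₀ t s st * cKer P π πt c s st s' st'
        = mu P π πt c ρ₀ t s st * ∑ a, π s a * P s a s' := fun st => by
      rw [← Finset.mul_sum, cKer_fst P π πt c hPsum hπtsum hc1]
    simp only [h]
    rw [← Finset.sum_mul, mu_fst P π πt c ρ₀ hPsum hπtsum hc1 t s, Finset.mul_sum]
    exact Finset.sum_congr rfl fun a _ => by ring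

lemma mu_snd (P : S → A → S → ℝ) (π πt : S → A → ℝ) (c : S → A → A → ℝ) (ρ₀ : S → ℝ)
    (hPsum : ∀ s a, ∑ s', P s a s' = 1)
    (hπsum : ∀ s, ∑ a, π s a = 1)
    (hc2 : ∀ s b, ∑ a, c s a b = πt s b) :
    ∀ t st, ∑ s, mu P π πt c ρ₀ t s st = stateDist P πt ρ₀ t st
  | 0, st => by
    simp only [mu, stateDist]
    rw [Finset.sum_ite_eq' Finset.univ st ρ₀]
    simp
  | (t+1), st' => by
    simp only [mu, stateDist]
    have h : ∀ s st, ∑ s', mu P π πt c ρ₀ t s st * cKer P π πt c s st s' st'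
        = mu P π πt c ρ₀ t s st * ∑ b, πt st b * P st b st' := fun s st => by
      rw [← Finset.mul_sum, cKer_snd P π πt c hPsum hπsum hc2]
    calc ∑ s', ∑ s, ∑ st, mu P π πt c ρ₀ t s st * cKer P π πt c s st s' st'
        = ∑ s, ∑ st, ∑ s', mu P π πt c ρ₀ t s st * cKer P π πt c s st s' st' :=
          (sum_comm3 _).symm
      _ = ∑ s, ∑ st, mu P π πt c ρ₀ t s st * ∑ b, πt st b * P st b st' := by
          simp only [h]
      _ = ∑ st, (∑ s, mu P π πt c ρ₀ t s st) * ∑ b, πt st b * P st b st' := by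
          rw [Finset.sum_comm]
          exact Finset.sum_congr rfl fun st _ => (Finset.sum_mul ..).symm
      _ = ∑ st, ∑ b, stateDist P πt ρ₀ t st * πt st b * P st b st' := by
          refine Finset.sum_congr rfl fun st _ => ?_
          rw [mu_snd P π πt c ρ₀ hPsum hπsum hc2 t st, Finset.mul_sum]
          exact Finset.sum_congr rfl fun b _ => by ring

lemma mu_diag (P : S → A → S → ℝ) (π πt : S → A → ℝ) (c : S → A → A → ℝ) (ρ₀ : S → ℝ)
    (α : ℝ)
    (hP : ∀ s a s', 0 ≤ P s a s') (hπ : ∀ s a, 0 ≤ π s a) (hπt : ∀ s a, 0 ≤ πt s a)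
    (hc : ∀ s a b, 0 ≤ c s a b) (hρ : ∀ s, 0 ≤ ρ₀ s) (hρsum : ∑ s, ρ₀ s = 1)
    (hPsum : ∀ s a, ∑ s', P s a s' = 1)
    (hα : 0 ≤ 1 - α) (hcdiag : ∀ s, 1 - α ≤ ∑ a, c s a a) :
    ∀ t, (1-α)^t ≤ ∑ s, mu P π πt c ρ₀ t s s
  | 0 => by simp [mu, hρsum]
  | (t+1) => by
    have ih := mu_diag P π πt c ρ₀ α hP hπ hπt hc hρ hρsum hPsum hα hcdiag t
    have hker := cKer_nonneg P π πt c hP hπ hπt hc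
    have hmu := mu_nonneg P π πt c ρ₀ hP hπ hπt hc hρ
    have hq : ∀ s, 1 - α ≤ ∑ s', cKer P π πt c s s s' s' := by
      intro s
      have h1 : ∀ s', (∑ a, c s a a * P s a s') ≤ cKer P π πt c s s s' s' := by
        intro s'
        unfold cKer
        rw [if_pos rfl]
        refine Finset.sum_le_sum fun a _ => ?_
        have h2 := Finset.single_le_sum (f := fun b => c s a b *
            (if a = b then (if s' = s' then P s a s' else 0) else P s a s' * P s b s'))
          (fun b _ => ?_) (Finset.mem_univ a)
        · simpa using h2
        · refine mul_nonneg (hc s a b) ?_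
          split
          · split <;> simp [hP]
          · exact mul_nonneg (hP _ _ _) (hP _ _ _)
      calc 1 - α ≤ ∑ a, c s a a := hcdiag s
        _ = ∑ s', ∑ a, c s a a * P s a s' := by
            rw [Finset.sum_comm]
            simp [← Finset.mul_sum, hPsum]
        _ ≤ ∑ s', cKer P π πt c s s s' s' := Finset.sum_le_sum fun s' _ => h1 s'
    calc (1-α)^(t+1) = (1-α) * (1-α)^t := by ring
      _ ≤ (1-α) * ∑ s, mu P π πt c ρ₀ t s s := mul_le_mul_of_nonneg_left ih hα
      _ = ∑ s, mu P π πt c ρ₀ t s s * (1-α) := by rw [mul_comm, Finset.sum_mul]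
      _ ≤ ∑ s, mu P π πt c ρ₀ t s s * (∑ s', cKer P π πt c s s s' s') :=
          Finset.sum_le_sum fun s _ => mul_le_mul_of_nonneg_left (hq s) (hmu t s s)
      _ ≤ ∑ s, ∑ st, mu P π πt c ρ₀ t s st * (∑ s', cKer P π πt c s st s' s') :=
          Finset.sum_le_sum fun s _ => Finset.single_le_sum
            (fun st _ => mul_nonneg (hmu t s st)
              (Finset.sum_nonneg fun s' _ => hker s st s' s')) (Finset.mem_univ s)
      _ = ∑ s', mu P π πt c ρ₀ (t+1) s' s' := by
          simp only [mu, Finset.mul_sum]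
          exact sum_comm3 _

lemma tv_bound (P : S → A → S → ℝ) (π πt : S → A → ℝ) (c : S → A → A → ℝ) (ρ₀ : S → ℝ)
    (α : ℝ)
    (hP : ∀ s a s', 0 ≤ P s a s') (hπ : ∀ s a, 0 ≤ π s a) (hπt : ∀ s a, 0 ≤ πt s a)
    (hc : ∀ s a b, 0 ≤ c s a b) (hρ : ∀ s, 0 ≤ ρ₀ s) (hρsum : ∑ s, ρ₀ s = 1)
    (hPsum : ∀ s a, ∑ s', P s a s' = 1)
    (hπsum : ∀ s, ∑ a, π s a = 1) (hπtsum : ∀ s, ∑ a, πt s a = 1)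
    (hc1 : ∀ s a, ∑ b, c s a b = π s a) (hc2 : ∀ s b, ∑ a, c s a b = πt s b)
    (hα : 0 ≤ 1 - α) (hcdiag : ∀ s, 1 - α ≤ ∑ a, c s a a) (t : ℕ) :
    ∑ s, |stateDist P πt ρ₀ t s - stateDist P π ρ₀ t s| ≤ 2 * (1 - (1-α)^t) := by
  have hmu := mu_nonneg P π πt c ρ₀ hP hπ hπt hc hρ
  have hfst := mu_fst P π πt c ρ₀ hPsum hπtsum hc1
  have hsnd := mu_snd P π πt c ρ₀ hPsum hπsum hc2
  have hdiag := mu_diag P π πt c ρ₀ α hP hπ hπt hc hρ hρsum hPsum hα hcdiag t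
  have total1 : ∑ s, ∑ st, mu P π πt c ρ₀ t s st = 1 := by
    simp only [hfst]
    exact stateDist_sum' P π ρ₀ hPsum hρsum hπsum t
  have total2 : ∑ st, ∑ s, mu P π πt c ρ₀ t s st = 1 := by
    rw [Finset.sum_comm]; exact total1
  have hstep : ∀ s, |stateDist P πt ρ₀ t s - stateDist P π ρ₀ t s|
      ≤ (∑ st, mu P π πt c ρ₀ t st s - mu P π πt c ρ₀ t s s)
        + (∑ st, mu P π πt c ρ₀ t s st - mu P π πt c ρ₀ t s s) := by
    intro s
    rw [← hfst t s, ← hsnd t s]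
    have h1 : mu P π πt c ρ₀ t s s ≤ ∑ st, mu P π πt c ρ₀ t st s :=
      Finset.single_le_sum (fun st _ => hmu t st s) (Finset.mem_univ s)
    have h2 : mu P π πt c ρ₀ t s s ≤ ∑ st, mu P π πt c ρ₀ t s st :=
      Finset.single_le_sum (fun st _ => hmu t s st) (Finset.mem_univ s)
    rw [abs_sub_le_iff]
    constructor <;> linarith
  calc ∑ s, |stateDist P πt ρ₀ t s - stateDist P π ρ₀ t s|
      ≤ ∑ s, ((∑ st, mu P π πt c ρ₀ t st s - mu P π πt c ρ₀ t s s)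
        + (∑ st, mu P π πt c ρ₀ t s st - mu P π πt c ρ₀ t s s)) :=
        Finset.sum_le_sum fun s _ => hstep s
    _ = (1 - ∑ s, mu P π πt c ρ₀ t s s) + (1 - ∑ s, mu P π πt c ρ₀ t s s) := by
        rw [Finset.sum_add_distrib, Finset.sum_sub_distrib, Finset.sum_sub_distrib]
        rw [show (∑ s, ∑ st, mu P π πt c ρ₀ t st s) = 1 from total2, total1]
    _ ≤ 2 * (1 - (1-α)^t) := by linarith

end Mu
open Filter Topology

open Filter Topology

set_option maxHeartbeats 2000000 in
/-- For an α-coupled policy pair, |η(π̃) − L_π(π̃)| ≤ 2εγα/((1−γ)(1−γ(1−α))). -/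
theorem stmt_5 {S A : Type} [Fintype S] [Fintype A] [Nonempty S] [DecidableEq A]
    (P : S → A → S → ℝ) (r : S → ℝ) (ρ₀ : S → ℝ) (γ : ℝ) (α : ℝ)
    (π πt : S → A → ℝ) (c : S → A → A → ℝ) (V Vt : S → ℝ) (Q Aπ : S → A → ℝ)
    (hγ0 : 0 < γ) (hγ1 : γ < 1) (hα0 : 0 ≤ α) (hα1 : α ≤ 1)
    (hPpos : ∀ s a s', 0 ≤ P s a s') (hPsum : ∀ s a, ∑ s', P s a s' = 1)
    (hρpos : ∀ s, 0 ≤ ρ₀ s) (hρsum : ∑ s, ρ₀ s = 1)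
    (hπpos : ∀ s a, 0 ≤ π s a) (hπsum : ∀ s, ∑ a, π s a = 1)
    (hπtpos : ∀ s a, 0 ≤ πt s a) (hπtsum : ∀ s, ∑ a, πt s a = 1)
    (hcpos : ∀ s a at_, 0 ≤ c s a at_)
    (hc1 : ∀ s a, ∑ at_, c s a at_ = π s a)
    (hc2 : ∀ s at_, ∑ a, c s a at_ = πt s at_)
    (hcdis : ∀ s, ∑ a, ∑ at_, (if a ≠ at_ then c s a at_ else 0) ≤ α)
    (hV : ∀ s, V s = ∑ a, π s a * (r s + γ * ∑ s', P s a s' * V s'))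
    (hVt : ∀ s, Vt s = ∑ a, πt s a * (r s + γ * ∑ s', P s a s' * Vt s'))
    (hQ : ∀ s a, Q s a = r s + γ * ∑ s', P s a s' * V s')
    (hA : ∀ s a, Aπ s a = Q s a - V s)
    (ε : ℝ)
    (hε : IsGreatest (Set.range fun s => |∑ a, πt s a * Aπ s a|) ε)
    (η ηt L : ℝ)
    (hη : η = ∑ s, ρ₀ s * V s) (hηt : ηt = ∑ s, ρ₀ s * Vt s)
    (hL : L = η + ∑ s, visit P π ρ₀ γ s * ∑ a, πt s a * Aπ s a) :
    |ηt - L| ≤ 2 * ε * γ * α / ((1 - γ) * (1 - γ * (1 - α))) := by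
  have hγ0' : (0:ℝ) ≤ γ := le_of_lt hγ0
  set β : ℝ := γ * (1 - α) with hβ
  have hβ0 : 0 ≤ β := mul_nonneg hγ0' (by linarith)
  have hβ1 : β < 1 := by nlinarith
  set Ab : S → ℝ := fun s => ∑ a, πt s a * Aπ s a with hAbdef
  have hε0 : 0 ≤ ε := by
    obtain ⟨s0, hs0⟩ := hε.1
    exact hs0 ▸ abs_nonneg _
  have hεb : ∀ s, |Ab s| ≤ ε := fun s => hε.2 (Set.mem_range_self s)
  -- diagonal mass of the coupling
  have hcdiag : ∀ s, 1 - α ≤ ∑ a, c s a a := by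
    intro s
    have h2 : ∀ a, ∑ b, (if a ≠ b then c s a b else 0) = π s a - c s a a := by
      intro a
      have h3 : ∑ b, (if a = b then c s a b else 0) = c s a a := by
        simp
      have h4 : ∑ b, ((if a ≠ b then c s a b else 0) + (if a = b then c s a b else 0))
          = π s a := by
        have h5 : ∀ b, (if a ≠ b then c s a b else 0) + (if a = b then c s a b else 0)
            = c s a b := by
          intro b; by_cases h : a = b <;> simp [h]
        simp only [h5, hc1]
      rw [Finset.sum_add_distrib, h3] at h4
      linarith
    have h6 := hcdis s
    simp only [h2, Finset.sum_sub_distrib, hπsum] at h6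
    linarith
  -- value-difference recursion
  set D : S → ℝ := fun s => Vt s - V s with hDdef
  have hVt' : ∀ s, Vt s = r s + γ * ∑ a, πt s a * ∑ s', P s a s' * Vt s' := by
    intro s
    rw [hVt s]
    simp only [mul_add, Finset.sum_add_distrib, ← Finset.sum_mul, hπtsum, one_mul]
    congr 1
    rw [Finset.mul_sum]
    exact Finset.sum_congr rfl fun a _ => by ring
  have hAb' : ∀ s, Ab s = r s + γ * (∑ a, πt s a * ∑ s', P s a s' * V s') - V s := by
    intro s
    simp only [hAbdef, hA, hQ, mul_sub, mul_add, Finset.sum_sub_distrib,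
      Finset.sum_add_distrib, ← Finset.sum_mul, hπtsum, one_mul]
    have h7 : ∑ a, πt s a * (γ * ∑ s', P s a s' * V s')
        = γ * ∑ a, πt s a * ∑ s', P s a s' * V s' := by
      rw [Finset.mul_sum]; exact Finset.sum_congr rfl fun a _ => by ring
    rw [h7]
  have hsplit : ∀ s, ∑ a, πt s a * ∑ s', P s a s' * D s'
      = (∑ a, πt s a * ∑ s', P s a s' * Vt s')
        - ∑ a, πt s a * ∑ s', P s a s' * V s' := by
    intro s
    rw [← Finset.sum_sub_distrib]
    refine Finset.sum_congr rfl fun a _ => ?_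
    rw [← mul_sub, ← Finset.sum_sub_distrib]
    congr 1
    refine Finset.sum_congr rfl fun s' _ => ?_
    simp only [hDdef]; ring
  have hD : ∀ s, D s = Ab s + γ * ∑ a, πt s a * ∑ s', P s a s' * D s' := by
    intro s
    have h1 := hVt' s
    have h2 := hAb' s
    have h3 := hsplit s
    simp only [hDdef]
    rw [h3, mul_sub]
    linarith
  -- key telescoping identity
  have key : ∀ T, ∑ s, ρ₀ s * D s
      = (∑ t ∈ Finset.range T, γ^t * ∑ s, stateDist P πt ρ₀ t s * Ab s)
        + γ^T * ∑ s, stateDist P πt ρ₀ T s * D s := by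
    intro T
    induction T with
    | zero => simp [stateDist]
    | succ T ih =>
      rw [Finset.sum_range_succ]
      have e2 : ∑ s, stateDist P πt ρ₀ T s * ∑ a, πt s a * ∑ s', P s a s' * D s'
          = ∑ s', stateDist P πt ρ₀ (T+1) s' * D s' := by
        have lhs : ∑ s, stateDist P πt ρ₀ T s * ∑ a, πt s a * ∑ s', P s a s' * D s'
            = ∑ s, ∑ a, ∑ s', stateDist P πt ρ₀ T s * (πt s a * (P s a s' * D s')) := by
          refine Finset.sum_congr rfl fun s _ => ?_
          rw [Finset.mul_sum]
          refine Finset.sum_congr rfl fun a _ => ?_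
          rw [Finset.mul_sum, Finset.mul_sum]
        have rhs : ∑ s', stateDist P πt ρ₀ (T+1) s' * D s'
            = ∑ s', ∑ s, ∑ a, stateDist P πt ρ₀ T s * (πt s a * (P s a s' * D s')) := by
          refine Finset.sum_congr rfl fun s' _ => ?_
          simp only [stateDist]
          rw [Finset.sum_mul]
          refine Finset.sum_congr rfl fun s _ => ?_
          rw [Finset.sum_mul]
          exact Finset.sum_congr rfl fun a _ => by ring
        rw [lhs, rhs]
        exact sum_comm3 _
      have e1 : ∑ s, stateDist P πt ρ₀ T s * D s
          = ∑ s, stateDist P πt ρ₀ T s * Ab s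
            + γ * ∑ s', stateDist P πt ρ₀ (T+1) s' * D s' := by
        rw [← e2]
        calc ∑ s, stateDist P πt ρ₀ T s * D s
            = ∑ s, stateDist P πt ρ₀ T s
              * (Ab s + γ * ∑ a, πt s a * ∑ s', P s a s' * D s') :=
              Finset.sum_congr rfl fun s _ => by rw [← hD s]
          _ = ∑ s, stateDist P πt ρ₀ T s * Ab s
              + γ * ∑ s, stateDist P πt ρ₀ T s * ∑ a, πt s a * ∑ s', P s a s' * D s' := by
              simp only [mul_add, Finset.sum_add_distrib]
              congr 1
              rw [Finset.mul_sum]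
              exact Finset.sum_congr rfl fun s _ => by ring
      rw [ih, e1]
      ring
  -- basic facts about state distributions
  have hdpos := stateDist_nonneg P π ρ₀ hPpos hρpos hπpos
  have hdtpos := stateDist_nonneg P πt ρ₀ hPpos hρpos hπtpos
  have hdsum := stateDist_sum' P π ρ₀ hPsum hρsum hπsum
  have hdtsum := stateDist_sum' P πt ρ₀ hPsum hρsum hπtsum
  have hdle1 : ∀ t s, stateDist P π ρ₀ t s ≤ 1 := fun t s => by
    rw [← hdsum t]
    exact Finset.single_le_sum (fun s' _ => hdpos t s') (Finset.mem_univ s)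
  have hdtle1 : ∀ t s, stateDist P πt ρ₀ t s ≤ 1 := fun t s => by
    rw [← hdtsum t]
    exact Finset.single_le_sum (fun s' _ => hdtpos t s') (Finset.mem_univ s)
  set f : ℕ → ℝ := fun t => γ^t * ∑ s, stateDist P πt ρ₀ t s * Ab s with hfdef
  set g : ℕ → ℝ := fun t => γ^t * ∑ s, stateDist P π ρ₀ t s * Ab s with hgdef
  have hsumgeo : Summable (fun t : ℕ => γ ^ t) := summable_geometric_of_lt_one hγ0' hγ1
  have hsumgeoβ : Summable (fun t : ℕ => β ^ t) := summable_geometric_of_lt_one hβ0 hβ1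
  have habs1 : ∀ t, |∑ s, stateDist P πt ρ₀ t s * Ab s| ≤ ε := by
    intro t
    calc |∑ s, stateDist P πt ρ₀ t s * Ab s|
        ≤ ∑ s, |stateDist P πt ρ₀ t s * Ab s| := Finset.abs_sum_le_sum_abs _ _
      _ ≤ ∑ s, stateDist P πt ρ₀ t s * ε := Finset.sum_le_sum fun s _ => by
          rw [abs_mul, abs_of_nonneg (hdtpos t s)]
          exact mul_le_mul_of_nonneg_left (hεb s) (hdtpos t s)
      _ = ε := by rw [← Finset.sum_mul, hdtsum, one_mul]
  have habs2 : ∀ t, |∑ s, stateDist P π ρ₀ t s * Ab s| ≤ ε := by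
    intro t
    calc |∑ s, stateDist P π ρ₀ t s * Ab s|
        ≤ ∑ s, |stateDist P π ρ₀ t s * Ab s| := Finset.abs_sum_le_sum_abs _ _
      _ ≤ ∑ s, stateDist P π ρ₀ t s * ε := Finset.sum_le_sum fun s _ => by
          rw [abs_mul, abs_of_nonneg (hdpos t s)]
          exact mul_le_mul_of_nonneg_left (hεb s) (hdpos t s)
      _ = ε := by rw [← Finset.sum_mul, hdsum, one_mul]
  have hf_sum : Summable f := by
    refine Summable.of_norm_bounded (hsumgeo.mul_left ε) fun t => ?_
    rw [Real.norm_eq_abs, hfdef, abs_mul, abs_pow, abs_of_nonneg hγ0', mul_comm]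
    exact mul_le_mul_of_nonneg_right (habs1 t) (pow_nonneg hγ0' t)
  have hg_sum : Summable g := by
    refine Summable.of_norm_bounded (hsumgeo.mul_left ε) fun t => ?_
    rw [Real.norm_eq_abs, hgdef, abs_mul, abs_pow, abs_of_nonneg hγ0', mul_comm]
    exact mul_le_mul_of_nonneg_right (habs2 t) (pow_nonneg hγ0' t)
  -- tsum f = ηt - η
  have hfval : ∑' t, f t = ηt - η := by
    set M : ℝ := ∑ s, |D s| with hMdef
    have hrembd : ∀ T : ℕ, ‖γ^T * ∑ s, stateDist P πt ρ₀ T s * D s‖ ≤ M * γ^T := by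
      intro T
      rw [Real.norm_eq_abs, abs_mul, abs_pow, abs_of_nonneg hγ0', mul_comm]
      refine mul_le_mul_of_nonneg_right ?_ (pow_nonneg hγ0' T)
      calc |∑ s, stateDist P πt ρ₀ T s * D s|
          ≤ ∑ s, |stateDist P πt ρ₀ T s * D s| := Finset.abs_sum_le_sum_abs _ _
        _ ≤ ∑ s, |D s| := Finset.sum_le_sum fun s _ => by
            rw [abs_mul, abs_of_nonneg (hdtpos T s)]
            calc stateDist P πt ρ₀ T s * |D s| ≤ 1 * |D s| :=
                  mul_le_mul_of_nonneg_right (hdtle1 T s) (abs_nonneg _)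
              _ = |D s| := one_mul _
    have hrem : Tendsto (fun T : ℕ => γ^T * ∑ s, stateDist P πt ρ₀ T s * D s)
        atTop (𝓝 0) := by
      refine squeeze_zero_norm hrembd ?_
      simpa using (tendsto_pow_atTop_nhds_zero_of_lt_one hγ0' hγ1).const_mul M
    have heq : ∀ T : ℕ, ∑ t ∈ Finset.range T, f t
        = ∑ s, ρ₀ s * D s - γ^T * ∑ s, stateDist P πt ρ₀ T s * D s := by
      intro T
      have := key T
      simp only [hfdef]
      linarith
    have hlim : Tendsto (fun T : ℕ => ∑ t ∈ Finset.range T, f t)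
        atTop (𝓝 (∑ s, ρ₀ s * D s)) := by
      simp only [heq]
      simpa using tendsto_const_nhds.sub hrem
    have h8 : ∑' t, f t = ∑ s, ρ₀ s * D s :=
      tendsto_nhds_unique hf_sum.hasSum.tendsto_sum_nat hlim
    rw [h8, hηt, hη, ← Finset.sum_sub_distrib]
    exact Finset.sum_congr rfl fun s _ => by simp only [hDdef]; ring
  -- tsum g = L - η
  have hgval : ∑' t, g t = L - η := by
    have h1 : ∀ s, visit P π ρ₀ γ s * Ab s
        = ∑' t, γ^t * stateDist P π ρ₀ t s * Ab s := by
      intro s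
      rw [visit, ← tsum_mul_right]
    have hsumm : ∀ s : S, Summable (fun t : ℕ => γ^t * stateDist P π ρ₀ t s * Ab s) := by
      intro s
      refine Summable.of_norm_bounded (hsumgeo.mul_left |Ab s|) fun t => ?_
      rw [Real.norm_eq_abs, abs_mul, abs_mul, abs_pow, abs_of_nonneg hγ0',
        abs_of_nonneg (hdpos t s)]
      calc γ^t * stateDist P π ρ₀ t s * |Ab s| ≤ γ^t * 1 * |Ab s| := by
            refine mul_le_mul_of_nonneg_right ?_ (abs_nonneg _)
            exact mul_le_mul_of_nonneg_left (hdle1 t s) (pow_nonneg hγ0' t)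
        _ = |Ab s| * γ^t := by ring
    have h2 : ∑ s, visit P π ρ₀ γ s * Ab s
        = ∑' t, ∑ s, γ^t * stateDist P π ρ₀ t s * Ab s := by
      simp only [h1]
      exact (Summable.tsum_finsetSum fun s _ => hsumm s).symm
    have h3 : ∀ t : ℕ, g t = ∑ s, γ^t * stateDist P π ρ₀ t s * Ab s := by
      intro t
      simp only [hgdef, Finset.mul_sum]
      exact Finset.sum_congr rfl fun s _ => by ring
    rw [hL]
    simp only [← hAbdef] at *
    rw [show η + ∑ s, visit P π ρ₀ γ s * Ab s - η = ∑ s, visit P π ρ₀ γ s * Ab s by ring]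
    rw [h2]
    exact tsum_congr h3
  -- pointwise bound on f - g
  have htv := tv_bound P π πt c ρ₀ α hPpos hπpos hπtpos hcpos hρpos hρsum hPsum
    hπsum hπtsum hc1 hc2 (by linarith) hcdiag
  have hpt : ∀ t, |f t - g t| ≤ 2*ε*(γ^t - β^t) := by
    intro t
    have hfg : f t - g t
        = γ^t * ∑ s, (stateDist P πt ρ₀ t s - stateDist P π ρ₀ t s) * Ab s := by
      simp only [hfdef, hgdef, ← mul_sub, ← Finset.sum_sub_distrib]
      congr 1
      exact Finset.sum_congr rfl fun s _ => by ring
    rw [hfg, abs_mul, abs_pow, abs_of_nonneg hγ0']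
    have h1 : |∑ s, (stateDist P πt ρ₀ t s - stateDist P π ρ₀ t s) * Ab s|
        ≤ 2 * (1 - (1-α)^t) * ε := by
      calc |∑ s, (stateDist P πt ρ₀ t s - stateDist P π ρ₀ t s) * Ab s|
          ≤ ∑ s, |(stateDist P πt ρ₀ t s - stateDist P π ρ₀ t s) * Ab s| :=
            Finset.abs_sum_le_sum_abs _ _
        _ ≤ ∑ s, |stateDist P πt ρ₀ t s - stateDist P π ρ₀ t s| * ε :=
            Finset.sum_le_sum fun s _ => by
              rw [abs_mul]
              exact mul_le_mul_of_nonneg_left (hεb s) (abs_nonneg _)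
        _ = (∑ s, |stateDist P πt ρ₀ t s - stateDist P π ρ₀ t s|) * ε :=
            (Finset.sum_mul _ _ _).symm
        _ ≤ 2 * (1 - (1-α)^t) * ε :=
            mul_le_mul_of_nonneg_right (htv t) hε0
    calc γ^t * |∑ s, (stateDist P πt ρ₀ t s - stateDist P π ρ₀ t s) * Ab s|
        ≤ γ^t * (2 * (1 - (1-α)^t) * ε) :=
          mul_le_mul_of_nonneg_left h1 (pow_nonneg hγ0' t)
      _ = 2*ε*(γ^t - β^t) := by rw [hβ, mul_pow]; ring
  have hh_sum : Summable (fun t : ℕ => 2*ε*(γ^t - β^t)) :=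
    (hsumgeo.sub hsumgeoβ).mul_left (2*ε)
  have hfg_sum : Summable (fun t => f t - g t) := hf_sum.sub hg_sum
  have hfgabs_sum : Summable (fun t => |f t - g t|) := by
    refine Summable.of_nonneg_of_le (fun t => abs_nonneg _) hpt hh_sum
  have hηtL : ηt - L = ∑' t, (f t - g t) := by
    rw [Summable.tsum_sub hf_sum hg_sum, hfval, hgval]
    ring
  have hfinal : |ηt - L| ≤ ∑' t : ℕ, 2*ε*(γ^t - β^t) := by
    rw [hηtL]
    calc |∑' t, (f t - g t)| ≤ ∑' t, |f t - g t| := by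
          have h9 : Summable fun t => ‖f t - g t‖ := by
            simpa [Real.norm_eq_abs] using hfgabs_sum
          simpa [Real.norm_eq_abs] using norm_tsum_le_tsum_norm h9
      _ ≤ ∑' t : ℕ, 2*ε*(γ^t - β^t) := Summable.tsum_le_tsum hpt hfgabs_sum hh_sum
  have hgeoval : ∑' t : ℕ, 2*ε*(γ^t - β^t)
      = 2 * ε * γ * α / ((1 - γ) * (1 - γ * (1 - α))) := by
    rw [tsum_mul_left, Summable.tsum_sub hsumgeo hsumgeoβ,
      tsum_geometric_of_lt_one hγ0' hγ1, tsum_geometric_of_lt_one hβ0 hβ1]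
    have h1γ : (1:ℝ) - γ ≠ 0 := by linarith
    have h1β : (1:ℝ) - β ≠ 0 := by linarith
    rw [hβ] at h1β ⊢
    field_simp
    ring
  rw [← hgeoval]
  exact hfinal
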